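/- Let Ξ be an open subset of the upper half-plane {(a,b) ∈ ℝ² : b > 0}, let M, N : ℝ² → ℝ be continuously differentiable on Ξ, let t ∈ ℝ^p be a fixed unit vector, and let P_ℓ : ℝ^q → Cl_m be a homogeneous monogenic polynomial of degree ℓ. Define f on Ω = {(x,y) ∈ ℝ^p ⊕ ℝ^q : (⟨x,t⟩,|y|) ∈ Ξ} by f(x,y) = (M(θ,ρ) - t·ν·N(θ,ρ))·P_ℓ(y), with θ = ⟨x,t⟩, ρ = |y|, ν = ι(y)/|y|. If (⟨t,∂_x⟩ - t·∂_y) f = 0 on Ω, then f is monogenic on Ω, i.e. (∂_x + ∂_y) f = 0 on Ω. -/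

import Mathlib

noncomputable section
open scoped BigOperators

/-- The negative definite quadratic form `v ↦ -‖v‖²` on `ℝ^m`. -/
def Qf (m : ℕ) : QuadraticForm ℝ (Fin m → ℝ) :=
  QuadraticMap.weightedSumSquares ℝ (fun _ : Fin m => (-1 : ℝ))

/-- The real Clifford algebra `R_{0,m}`. -/
abbrev Cl (m : ℕ) := CliffordAlgebra (Qf m)

/-- Canonical embedding of vectors. -/
def clv {m : ℕ} (x : Fin m → ℝ) : Cl m := CliffordAlgebra.ι (Qf m) x

/-- The generators `e_j`. -/
def gen (m : ℕ) (j : Fin m) : Cl m := clv (Pi.single j 1)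

/-- The basis elements `e_A` (ordered products of generators). -/
def eProd (m : ℕ) (A : Finset (Fin m)) : Cl m :=
  ((A.sort (· ≤ ·)).map (gen m)).prod

/-- Euclidean norm on `Fin n → ℝ`. -/
def rnorm {n : ℕ} (y : Fin n → ℝ) : ℝ := Real.sqrt (∑ j, y j ^ 2)

/-- Partial derivative of a scalar function on `ℝ^n`. -/
def pd {n : ℕ} (j : Fin n) (g : (Fin n → ℝ) → ℝ) : (Fin n → ℝ) → ℝ :=
  fun x => deriv (fun s => g (Function.update x j s)) (x j)

/-- Componentwise partial derivative of a Clifford-valued function. -/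
def pdC {n m : ℕ} (b : Module.Basis (Finset (Fin m)) ℝ (Cl m)) (j : Fin n)
    (f : (Fin n → ℝ) → Cl m) : (Fin n → ℝ) → Cl m :=
  fun x => ∑ A : Finset (Fin m), pd j (fun w => (b.repr (f w)) A) x • b A

/-- `P` has all components (w.r.t. basis `b`) homogeneous polynomials of degree `deg`. -/
def IsHomPoly {n m : ℕ} (b : Module.Basis (Finset (Fin m)) ℝ (Cl m)) (deg : ℕ)
    (P : (Fin n → ℝ) → Cl m) : Prop :=
  ∀ A, ∃ Q : MvPolynomial (Fin n) ℝ, Q.IsHomogeneous deg ∧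
    ∀ w, MvPolynomial.eval w Q = (b.repr (P w)) A

/-- The operator `x⁻¹ ∂_x`. -/
def Dop (h : ℝ → ℝ) : ℝ → ℝ := fun s => s⁻¹ * deriv h s

/-- The operator `∂_x x⁻¹`. -/
def Eop (h : ℝ → ℝ) : ℝ → ℝ := fun s => deriv (fun u => u⁻¹ * h u) s

/-- Partial derivative w.r.t. the first variable of a function on `ℝ²`. -/
def pda (u : ℝ × ℝ → ℝ) : ℝ × ℝ → ℝ := fun w => deriv (fun s => u (s, w.2)) w.1

/-- Partial derivative w.r.t. the second variable of a function on `ℝ²`. -/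
def pdb (u : ℝ × ℝ → ℝ) : ℝ × ℝ → ℝ := fun w => deriv (fun s => u (w.1, s)) w.2

/-- The upper half-plane. -/
def UHP : Set (ℝ × ℝ) := {w | 0 < w.2}

section biaxial
variable {p q : ℕ}

/-- biaxial domain `ℝ^p ⊕ ℝ^q` -/
abbrev Zb (p q : ℕ) := (Fin p → ℝ) × (Fin q → ℝ)

def pdx (j : Fin p) (g : Zb p q → ℝ) : Zb p q → ℝ :=
  fun z => deriv (fun s => g (Function.update z.1 j s, z.2)) (z.1 j)

def pdy (j : Fin q) (g : Zb p q → ℝ) : Zb p q → ℝ :=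
  fun z => deriv (fun s => g (z.1, Function.update z.2 j s)) (z.2 j)

def pdxC (b : Module.Basis (Finset (Fin (p+q))) ℝ (Cl (p+q))) (j : Fin p)
    (f : Zb p q → Cl (p+q)) : Zb p q → Cl (p+q) :=
  fun z => ∑ A : Finset (Fin (p+q)), pdx j (fun w => (b.repr (f w)) A) z • b A

def pdyC (b : Module.Basis (Finset (Fin (p+q))) ℝ (Cl (p+q))) (j : Fin q)
    (f : Zb p q → Cl (p+q)) : Zb p q → Cl (p+q) :=
  fun z => ∑ A : Finset (Fin (p+q)), pdy j (fun w => (b.repr (f w)) A) z • b A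

/-- embedding `ℝ^p → ℝ^{p+q}` -/
def embX (x : Fin p → ℝ) : Fin (p+q) → ℝ := Fin.append x 0

/-- embedding `ℝ^q → ℝ^{p+q}` -/
def embY (y : Fin q → ℝ) : Fin (p+q) → ℝ := Fin.append 0 y

/-- The Dirac operator `∂_x` in the first group of variables. -/
def diracX (b : Module.Basis (Finset (Fin (p+q))) ℝ (Cl (p+q))) (f : Zb p q → Cl (p+q)) :
    Zb p q → Cl (p+q) :=
  fun z => ∑ j : Fin p, gen (p+q) (Fin.castAdd q j) * pdxC b j f z

/-- The Dirac operator `∂_y` in the second group of variables. -/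
def diracY (b : Module.Basis (Finset (Fin (p+q))) ℝ (Cl (p+q))) (f : Zb p q → Cl (p+q)) :
    Zb p q → Cl (p+q) :=
  fun z => ∑ j : Fin q, gen (p+q) (Fin.natAdd p j) * pdyC b j f z

/-- The operator `⟨t,∂_x⟩`. -/
def dirT (t : Fin p → ℝ) (b : Module.Basis (Finset (Fin (p+q))) ℝ (Cl (p+q)))
    (f : Zb p q → Cl (p+q)) : Zb p q → Cl (p+q) :=
  fun z => ∑ j : Fin p, t j • pdxC b j f z

/-- The Laplacian `Δ_x`. -/
def lapX (b : Module.Basis (Finset (Fin (p+q))) ℝ (Cl (p+q))) (f : Zb p q → Cl (p+q)) :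
    Zb p q → Cl (p+q) :=
  fun z => ∑ j : Fin p, pdxC b j (pdxC b j f) z

/-- The Laplacian `Δ_y`. -/
def lapY (b : Module.Basis (Finset (Fin (p+q))) ℝ (Cl (p+q))) (f : Zb p q → Cl (p+q)) :
    Zb p q → Cl (p+q) :=
  fun z => ∑ j : Fin q, pdyC b j (pdyC b j f) z

/-- `P : ℝ^q → Cl_{p+q}` is monogenic w.r.t. `∂_y`. -/
def MonoY (b : Module.Basis (Finset (Fin (p+q))) ℝ (Cl (p+q))) (P : (Fin q → ℝ) → Cl (p+q)) : Prop :=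
  ∀ y, ∑ j : Fin q, gen (p+q) (Fin.natAdd p j) * pdC b j P y = 0

/-- `P : ℝ^p → Cl_{p+q}` is monogenic w.r.t. `∂_x`. -/
def MonoX (b : Module.Basis (Finset (Fin (p+q))) ℝ (Cl (p+q))) (P : (Fin p → ℝ) → Cl (p+q)) : Prop :=
  ∀ x, ∑ j : Fin p, gen (p+q) (Fin.castAdd q j) * pdC b j P x = 0

/-- The even subalgebra generated by `e_1,…,e_p`, as a submodule. -/
def evenX (p q : ℕ) : Submodule ℝ (Cl (p+q)) :=
  Submodule.span ℝ {a | ∃ l : List (Fin p), Even l.length ∧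
    a = (l.map (fun j => gen (p+q) (Fin.castAdd q j))).prod}

/-- The even subalgebra generated by `e_{p+1},…,e_{p+q}`, as a submodule. -/
def evenY (p q : ℕ) : Submodule ℝ (Cl (p+q)) :=
  Submodule.span ℝ {a | ∃ l : List (Fin q), Even l.length ∧
    a = (l.map (fun j => gen (p+q) (Fin.natAdd p j))).prod}

end biaxial

/-- Gegenbauer polynomials `C_k^λ`. -/
def gegen (lam : ℝ) : ℕ → ℝ → ℝ
  | 0, _ => 1
  | 1, t => 2 * lam * t
  | (k+2), t => ((k : ℝ) + 2)⁻¹ *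
      (2 * (((k : ℝ) + 2) + lam - 1) * t * gegen lam (k+1) t -
        (((k : ℝ) + 2) + 2 * lam - 2) * gegen lam k t)

section axial
variable {m : ℕ}

/-- `∂_{x₀}` on `ℝ × ℝ^m`. -/
def pd0 (g : ℝ × (Fin m → ℝ) → ℝ) : ℝ × (Fin m → ℝ) → ℝ :=
  fun z => deriv (fun s => g (s, z.2)) z.1

/-- `∂_{x_j}` on `ℝ × ℝ^m`. -/
def pdX (j : Fin m) (g : ℝ × (Fin m → ℝ) → ℝ) : ℝ × (Fin m → ℝ) → ℝ :=
  fun z => deriv (fun s => g (z.1, Function.update z.2 j s)) (z.2 j)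

/-- componentwise `∂_{x₀}` for Clifford-valued functions. -/
def pd0C (b : Module.Basis (Finset (Fin m)) ℝ (Cl m)) (f : ℝ × (Fin m → ℝ) → Cl m) :
    ℝ × (Fin m → ℝ) → Cl m :=
  fun z => ∑ A : Finset (Fin m), pd0 (fun w => (b.repr (f w)) A) z • b A

/-- componentwise `∂_{x_j}` for Clifford-valued functions. -/
def pdXC (b : Module.Basis (Finset (Fin m)) ℝ (Cl m)) (j : Fin m) (f : ℝ × (Fin m → ℝ) → Cl m) :
    ℝ × (Fin m → ℝ) → Cl m :=
  fun z => ∑ A : Finset (Fin m), pdX j (fun w => (b.repr (f w)) A) z • b A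

/-- The full Laplacian `∂_{x₀}² + Δ_X` on `ℝ^{m+1}`, componentwise. -/
def lapFull (b : Module.Basis (Finset (Fin m)) ℝ (Cl m)) (f : ℝ × (Fin m → ℝ) → Cl m) :
    ℝ × (Fin m → ℝ) → Cl m :=
  fun z => pd0C b (pd0C b f) z + ∑ j : Fin m, pdXC b j (pdXC b j f) z

end axial

section ops
variable {p q : ℕ}

/-- The operator `⟨t,∂_x⟩² + Δ_y`. -/
def Lwave (t : Fin p → ℝ) (b : Module.Basis (Finset (Fin (p+q))) ℝ (Cl (p+q)))
    (f : Zb p q → Cl (p+q)) : Zb p q → Cl (p+q) :=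
  fun z => dirT t b (dirT t b f) z + lapY b f z

/-- The operator `Δ_x + Δ_y`. -/
def lapXY (b : Module.Basis (Finset (Fin (p+q))) ℝ (Cl (p+q)))
    (f : Zb p q → Cl (p+q)) : Zb p q → Cl (p+q) :=
  fun z => lapX b f z + lapY b f z

end ops
end


section auxlemmas
variable {p q : ℕ}

lemma embX_eq_sum (t : Fin p → ℝ) :
    (embX t : Fin (p+q) → ℝ) = ∑ j : Fin p, t j • (Pi.single (Fin.castAdd q j) (1:ℝ) : Fin (p+q) → ℝ) := by
  funext i
  rw [Finset.sum_apply]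
  simp only [Pi.smul_apply, Pi.single_apply, smul_eq_mul, mul_ite, mul_one, mul_zero]
  cases i using Fin.addCases with
  | left j =>
    rw [embX, Fin.append_left]
    rw [show (fun x => if Fin.castAdd q j = Fin.castAdd q x then t x else 0) = fun x => if j = x then t x else 0 from by funext x; simp [Fin.castAdd_inj]]
    rw [Finset.sum_ite_eq]
    simp
  | right j =>
    rw [embX, Fin.append_right]
    symm
    apply Finset.sum_eq_zero
    intro k _
    rw [if_neg]
    simp only [Fin.ext_iff, Fin.coe_natAdd, Fin.coe_castAdd]
    omega

lemma clv_embX (t : Fin p → ℝ) :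
    clv (embX t : Fin (p+q) → ℝ) = ∑ j : Fin p, t j • gen (p+q) (Fin.castAdd q j) := by
  rw [embX_eq_sum]
  unfold clv gen clv
  rw [map_sum]
  simp

lemma clv_embX_sq (t : Fin p → ℝ) (ht : ∑ j : Fin p, t j ^ 2 = 1) :
    clv (embX t : Fin (p+q) → ℝ) * clv (embX t) = -1 := by
  rw [clv, CliffordAlgebra.ι_sq_scalar]
  have h : Qf (p+q) (embX t) = -1 := by
    rw [Qf, QuadraticMap.weightedSumSquares_apply]
    rw [Fin.sum_univ_add]
    simp only [embX, Fin.append_left, Fin.append_right, Pi.zero_apply, smul_eq_mul,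
      mul_zero, Finset.sum_const_zero, add_zero, neg_one_mul]
    rw [← ht, ← Finset.sum_neg_distrib]
    congr 1
    funext j
    ring

  rw [h]
  simp [Algebra.algebraMap_eq_smul_one]

end auxlemmas

/-- an axial null solution of `⟨t,∂_x⟩ - t∂_y` is monogenic. -/
theorem axial_null_solution_monogenic (p q ℓ : ℕ) (hp : 1 ≤ p) (hq : 1 ≤ q)
    (b : Module.Basis (Finset (Fin (p+q))) ℝ (Cl (p+q))) (hb : ∀ A, b A = eProd (p+q) A)
    (Ξ : Set (ℝ × ℝ)) (hΞo : IsOpen Ξ) (hΞ : Ξ ⊆ UHP)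
    (M N : ℝ × ℝ → ℝ) (hM : ContDiffOn ℝ 1 M Ξ) (hN : ContDiffOn ℝ 1 N Ξ)
    (t : Fin p → ℝ) (ht : ∑ j : Fin p, t j ^ 2 = 1)
    (P : (Fin q → ℝ) → Cl (p+q)) (hP : IsHomPoly b ℓ P) (hPmono : MonoY b P)
    (f : Zb p q → Cl (p+q))
    (hf : f = fun z => M (∑ j : Fin p, z.1 j * t j, rnorm z.2) • P z.2 -
      ((rnorm z.2)⁻¹ * N (∑ j : Fin p, z.1 j * t j, rnorm z.2)) •
        (clv (embX t) * clv (embY z.2) * P z.2))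
    (hnull : ∀ z : Zb p q, (∑ j : Fin p, z.1 j * t j, rnorm z.2) ∈ Ξ →
      dirT t b f z - clv (embX t) * diracY b f z = 0) :
    ∀ z : Zb p q, (∑ j : Fin p, z.1 j * t j, rnorm z.2) ∈ Ξ →
      diracX b f z + diracY b f z = 0 := by
  intro z hz
  set θ : ℝ := ∑ j : Fin p, z.1 j * t j with hθdef
  set ρ : ℝ := rnorm z.2 with hρdef
  -- component functions
  set α : Finset (Fin (p+q)) → ℝ → ℝ := fun A s =>
    M (s, ρ) * (b.repr (P z.2)) A -
      (ρ⁻¹ * N (s, ρ)) * (b.repr (clv (embX t) * clv (embY z.2) * P z.2)) A with hα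
  -- differentiability of each α A at θ
  have hmemΞ : (θ, ρ) ∈ Ξ := hz
  have hline : DifferentiableAt ℝ (fun s : ℝ => (s, ρ)) θ :=
    (differentiableAt_id).prodMk (differentiableAt_const _)
  have hMd : DifferentiableAt ℝ (fun s => M (s, ρ)) θ :=
    DifferentiableAt.comp θ
      (((hM.differentiableOn one_ne_zero).differentiableAt (hΞo.mem_nhds hmemΞ))) hline
  have hNd : DifferentiableAt ℝ (fun s => N (s, ρ)) θ :=
    DifferentiableAt.comp θ
      (((hN.differentiableOn one_ne_zero).differentiableAt (hΞo.mem_nhds hmemΞ))) hline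
  have hαd : ∀ A, DifferentiableAt ℝ (α A) θ := fun A =>
    (hMd.mul_const _).sub ((hNd.const_mul _).mul_const _)
  set Gv : Cl (p+q) := ∑ A : Finset (Fin (p+q)), deriv (α A) θ • b A with hGv
  -- key: each partial in x-direction is a multiple of Gv
  have key : ∀ j : Fin p, pdxC b j f z = t j • Gv := by
    intro j
    set c : ℝ := ∑ k ∈ Finset.univ \ {j}, z.1 k * t k with hc
    have hsum : ∀ s : ℝ, ∑ k : Fin p, Function.update z.1 j s k * t k = s * t j + c := by
      intro s
      rw [show (fun k => Function.update z.1 j s k * t k)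
          = Function.update (fun k => z.1 k * t k) j (s * t j) from by
        funext k
        by_cases hk : k = j
        · subst hk; simp
        · simp [Function.update_apply, hk]]
      exact Finset.sum_update_of_mem (Finset.mem_univ j) (fun k => z.1 k * t k) (s * t j)
    have hθc : θ = z.1 j * t j + c := by
      have := hsum (z.1 j)
      rwa [Function.update_eq_self] at this
    have hcompA : ∀ A : Finset (Fin (p+q)), ∀ s : ℝ,
        (b.repr (f (Function.update z.1 j s, z.2))) A = α A (s * t j + c) := by
      intro A s
      rw [hf]
      simp only [map_sub, map_smul, Finsupp.sub_apply, Finsupp.smul_apply, smul_eq_mul]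
      rw [hα]
      simp only [← hρdef, hsum s]
    have hderiv : ∀ A : Finset (Fin (p+q)),
        pdx j (fun w => (b.repr (f w)) A) z = deriv (α A) θ * t j := by
      intro A
      rw [pdx]
      have heq : (fun s => (b.repr (f (Function.update z.1 j s, z.2))) A)
          = fun s => α A (s * t j + c) := funext fun s => hcompA A s
      rw [heq]
      have hL : HasDerivAt (fun s : ℝ => s * t j + c) (t j) (z.1 j) := by
        simpa using ((hasDerivAt_id (z.1 j)).mul_const (t j)).add_const c
      have hA : HasDerivAt (α A) (deriv (α A) θ) θ := (hαd A).hasDerivAt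
      rw [hθc] at hA
      rw [hθc]
      exact (hA.comp (z.1 j) hL).deriv
    rw [pdxC]
    rw [Finset.smul_sum]
    refine Finset.sum_congr rfl fun A _ => ?_
    rw [hderiv A, mul_comm, mul_smul]
  have hdirT : dirT t b f z = Gv := by
    rw [dirT]
    simp only [key]
    rw [show (fun j => t j • t j • Gv) = fun j : Fin p => (t j ^ 2) • Gv from by
      funext j; rw [smul_smul, sq]]
    rw [← Finset.sum_smul, ht, one_smul]
  have hdirX : diracX b f z = clv (embX t) * Gv := by
    rw [diracX, clv_embX, Finset.sum_mul]
    refine Finset.sum_congr rfl fun j _ => ?_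
    rw [key j, mul_smul_comm, smul_mul_assoc]
  have hn := hnull z hz
  rw [hdirT, sub_eq_zero] at hn
  rw [hdirX, hn, ← mul_assoc, clv_embX_sq t ht]
  simp
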